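/- Let g : Ω → ℝ be a continuous function on a nonempty Polish space Ω. If ∫ g dμ ≥ 0 for every Borel probability measure μ on Ω with full support under which g is integrable, then g(ω) ≥ 0 for all ω ∈ Ω. -/

import Mathlib

open MeasureTheory

variable {Ω : Type*}

/-- A measure has full support: every nonempty open set has positive measure. -/
def HasFullSupport [TopologicalSpace Ω] [MeasurableSpace Ω] (P : Measure Ω) : Prop :=
  ∀ U : Set Ω, IsOpen U → U.Nonempty → 0 < P U

/-- a continuous function with nonnegative integral under every full support
Borel probability measure making it integrable is pointwise nonnegative. -/
theorem nonneg_of_integral_nonneg_fullSupport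
    [MetricSpace Ω] [Nonempty Ω] [TopologicalSpace.SeparableSpace Ω] [CompleteSpace Ω]
    [MeasurableSpace Ω] [BorelSpace Ω]
    (g : Ω → ℝ) (hg : Continuous g)
    (h : ∀ μ : Measure Ω, IsProbabilityMeasure μ → HasFullSupport μ →
      Integrable g μ → 0 ≤ ∫ ω, g ω ∂μ) :
    ∀ ω, 0 ≤ g ω := by
  by_contra hcon
  push_neg at hcon
  obtain ⟨ω₀, hω₀⟩ := hcon
  set a := g ω₀ with ha
  have hxdense := TopologicalSpace.denseRange_denseSeq Ω
  set x := TopologicalSpace.denseSeq Ω with hxdef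
  -- weights
  set b : ℕ → ℝ := fun n => (1/2 : ℝ)^(n+1) / (1 + |g (x n)|) with hb
  have habs : ∀ n, (0:ℝ) < 1 + |g (x n)| := fun n => by positivity
  have hbpos : ∀ n, 0 < b n := fun n => by
    have := habs n; simp only [hb]; positivity
  have hble : ∀ n, b n ≤ (1/2 : ℝ)^(n+1) := fun n => by
    rw [hb, div_le_iff₀ (habs n)]
    nlinarith [abs_nonneg (g (x n)), pow_pos (by norm_num : (0:ℝ) < 1/2) (n+1)]
  have hgeo : Summable (fun n : ℕ => (1/2 : ℝ)^(n+1)) := by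
    have : Summable (fun n : ℕ => (1/2 : ℝ)^n) :=
      summable_geometric_of_lt_one (by norm_num) (by norm_num)
    simpa [pow_succ, mul_comm] using this.mul_right (1/2 : ℝ)
  have hTval : (∑' n : ℕ, (1/2 : ℝ)^(n+1)) = 1 := by
    have h2 : (∑' n : ℕ, (1/2 : ℝ)^n) = 2 := by
      rw [tsum_geometric_of_lt_one (by norm_num) (by norm_num)]; norm_num
    calc (∑' n : ℕ, (1/2 : ℝ)^(n+1)) = ∑' n : ℕ, (1/2 : ℝ) * (1/2)^n := by
          congr 1; funext n; ring
      _ = (1/2 : ℝ) * ∑' n : ℕ, (1/2 : ℝ)^n := by rw [tsum_mul_left]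
      _ = 1 := by rw [h2]; norm_num
  have hbsummable : Summable b :=
    Summable.of_nonneg_of_le (fun n => (hbpos n).le) hble hgeo
  set S := ∑' n, b n with hS
  have hSpos : 0 < S := Summable.tsum_pos hbsummable (fun n => (hbpos n).le) 0 (hbpos 0)
  set c : ℕ → ℝ := fun n => b n / S with hc
  have hcpos : ∀ n, 0 < c n := fun n => div_pos (hbpos n) hSpos
  have hcsummable : Summable c := hbsummable.div_const S
  have hcsum : (∑' n, c n) = 1 := by
    rw [hc, tsum_div_const, ← hS, div_self hSpos.ne']
  have hcb : ∀ n, c n * |g (x n)| ≤ (1/2 : ℝ)^(n+1) / S := fun n => by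
    rw [hc, div_mul_eq_mul_div, div_le_div_iff₀ hSpos hSpos]
    have : b n * |g (x n)| ≤ (1/2:ℝ)^(n+1) := by
      rw [hb, div_mul_eq_mul_div, div_le_iff₀ (habs n)]
      nlinarith [abs_nonneg (g (x n)), pow_pos (by norm_num : (0:ℝ) < 1/2) (n+1)]
    nlinarith
  have hboundsummable : Summable (fun n : ℕ => (1/2 : ℝ)^(n+1) / S) := hgeo.div_const S
  have hboundsum : (∑' n : ℕ, (1/2 : ℝ)^(n+1) / S) = 1 / S := by
    rw [tsum_div_const, hTval]
  -- the measures
  set ν : Measure Ω := Measure.sum (fun n => ENNReal.ofReal (c n) • Measure.dirac (x n))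
    with hν
  set ε : ℝ := min (1/2) ((-a) * S / 4) with hε
  have hεpos : 0 < ε := lt_min (by norm_num) (by nlinarith)
  have hεhalf : ε ≤ 1/2 := min_le_left _ _
  have hεa : ε ≤ (-a) * S / 4 := min_le_right _ _
  set μ : Measure Ω := ENNReal.ofReal ε • ν + ENNReal.ofReal (1 - ε) • Measure.dirac ω₀
    with hμ
  have hνuniv : ν Set.univ = 1 := by
    rw [hν, Measure.sum_apply _ MeasurableSet.univ]
    simp only [Measure.smul_apply, Measure.dirac_apply_of_mem (Set.mem_univ _),
      smul_eq_mul, mul_one]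
    rw [← ENNReal.ofReal_tsum_of_nonneg (fun n => (hcpos n).le) hcsummable, hcsum]
    simp
  have hμuniv : IsProbabilityMeasure μ := by
    constructor
    rw [hμ]
    simp only [Measure.add_apply, Measure.smul_apply, smul_eq_mul]
    rw [hνuniv, Measure.dirac_apply_of_mem (Set.mem_univ _), mul_one, mul_one,
      ← ENNReal.ofReal_add hεpos.le (by linarith)]
    norm_num
  -- full support
  have hfull : HasFullSupport μ := by
    intro U hU hUne
    obtain ⟨n, hn⟩ := hxdense.exists_mem_open hU hUne
    have hνU : ENNReal.ofReal (c n) ≤ ν U := by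
      rw [hν, Measure.sum_apply _ hU.measurableSet]
      refine le_trans ?_ (ENNReal.le_tsum n)
      simp [Measure.smul_apply, Measure.dirac_apply_of_mem hn]
    have h1 : 0 < ENNReal.ofReal ε * ENNReal.ofReal (c n) :=
      ENNReal.mul_pos (ENNReal.ofReal_pos.mpr hεpos).ne'
        (ENNReal.ofReal_pos.mpr (hcpos n)).ne'
    calc (0:ENNReal) < ENNReal.ofReal ε * ENNReal.ofReal (c n) := h1
      _ ≤ ENNReal.ofReal ε * ν U := mul_le_mul_right hνU _
      _ ≤ μ U := by
          rw [hμ]; simp only [Measure.add_apply, Measure.smul_apply, smul_eq_mul]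
          exact le_add_right le_rfl
  -- integrability
  have hintν : Integrable g ν := by
    refine ⟨hg.aestronglyMeasurable, ?_⟩
    rw [hasFiniteIntegral_iff_norm, hν, lintegral_sum_measure]
    have hterm : ∀ n, ∫⁻ a, ENNReal.ofReal ‖g a‖ ∂(ENNReal.ofReal (c n) • Measure.dirac (x n))
        = ENNReal.ofReal (c n * |g (x n)|) := by
      intro n
      rw [lintegral_smul_measure, lintegral_dirac' _ hg.norm.measurable.ennreal_ofReal,
        smul_eq_mul, ← ENNReal.ofReal_mul (hcpos n).le, Real.norm_eq_abs]
    calc (∑' n, ∫⁻ a, ENNReal.ofReal ‖g a‖ ∂(ENNReal.ofReal (c n) • Measure.dirac (x n)))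
        = ∑' n, ENNReal.ofReal (c n * |g (x n)|) := by
          congr 1; funext n; exact hterm n
      _ ≤ ∑' n, ENNReal.ofReal ((1/2:ℝ)^(n+1) / S) :=
          ENNReal.tsum_le_tsum (fun n => ENNReal.ofReal_le_ofReal (hcb n))
      _ = ENNReal.ofReal (∑' n : ℕ, (1/2:ℝ)^(n+1) / S) :=
          (ENNReal.ofReal_tsum_of_nonneg
            (fun n => by positivity) hboundsummable).symm
      _ < ⊤ := ENNReal.ofReal_lt_top
  have hintdirac : Integrable g (Measure.dirac ω₀) := by
    refine ⟨hg.aestronglyMeasurable, ?_⟩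
    rw [hasFiniteIntegral_iff_norm, lintegral_dirac' _ hg.norm.measurable.ennreal_ofReal]
    exact ENNReal.ofReal_lt_top
  have hintεν : Integrable g (ENNReal.ofReal ε • ν) :=
    (integrable_smul_measure (ENNReal.ofReal_pos.mpr hεpos).ne'
      ENNReal.ofReal_ne_top).mpr hintν
  have hintεd : Integrable g (ENNReal.ofReal (1 - ε) • Measure.dirac ω₀) :=
    (integrable_smul_measure
      (ENNReal.ofReal_pos.mpr (by linarith : (0:ℝ) < 1 - ε)).ne'
      ENNReal.ofReal_ne_top).mpr hintdirac
  have hintμ : Integrable g μ := by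
    rw [hμ]; exact hintεν.add_measure hintεd
  -- compute the integral
  have hIν : ∫ ω, g ω ∂ν = ∑' n, c n * g (x n) := by
    rw [hν, integral_sum_measure (by rwa [← hν])]
    congr 1; funext n
    rw [integral_smul_measure, integral_dirac, ENNReal.toReal_ofReal (hcpos n).le,
      smul_eq_mul]
  have hsummable2 : Summable (fun n => c n * g (x n)) := by
    refine Summable.of_norm_bounded hboundsummable (fun n => ?_)
    rw [Real.norm_eq_abs, abs_mul, abs_of_nonneg (hcpos n).le]
    exact hcb n
  have hIbound : ∫ ω, g ω ∂ν ≤ 1 / S := by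
    rw [hIν, ← hboundsum]
    refine Summable.tsum_le_tsum (fun n => ?_) hsummable2 hboundsummable
    calc c n * g (x n) ≤ |c n * g (x n)| := le_abs_self _
      _ = c n * |g (x n)| := by rw [abs_mul, abs_of_nonneg (hcpos n).le]
      _ ≤ (1/2:ℝ)^(n+1) / S := hcb n
  have hIμ : ∫ ω, g ω ∂μ = ε * (∫ ω, g ω ∂ν) + (1 - ε) * a := by
    rw [hμ, integral_add_measure hintεν hintεd, integral_smul_measure,
      integral_smul_measure, integral_dirac, ENNReal.toReal_ofReal hεpos.le,
      ENNReal.toReal_ofReal (by linarith : (0:ℝ) ≤ 1 - ε), smul_eq_mul, smul_eq_mul, ha]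
  -- derive contradiction
  have hnonneg := h μ hμuniv hfull hintμ
  rw [hIμ] at hnonneg
  have h1 : ε * (∫ ω, g ω ∂ν) ≤ ε * (1 / S) :=
    mul_le_mul_of_nonneg_left hIbound hεpos.le
  have h2 : ε * (1 / S) ≤ (-a) / 4 := by
    rw [mul_one_div, div_le_div_iff₀ hSpos (by norm_num : (0:ℝ) < 4)]
    nlinarith
  have h3 : (1 - ε) * a ≤ (1/2) * a := by nlinarith
  linarith
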